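/- Variance transfer bound for the stochastic linear-system operator (established in the proof of Lemma D.3): let 0 ≤ q < 1 and σ₁′ ≥ 0. Let M be a random d×d real matrix with E[‖M‖²] < ∞, mean M̄ := E[M], and E[‖M − M̄‖²] ≤ σ₁′ (operator norm). Let G₁ ∈ ℝ^{d×d} with ‖G₁‖ ≤ 1 and ‖M̄ᵀG₁ᵀ‖ ≤ q. Fix y, v ∈ ℝ^d and set Ψ(v) := M̄ᵀG₁ᵀ v + y. Then E[‖MᵀG₁ᵀ v + y − Ψ(v)‖²] ≤ (2σ₁′/(1−q)²) · ‖Ψ(v) − v‖² + (2σ₁′/(1−q)²) · ‖y‖². -/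

import Mathlib

open MeasureTheory Matrix

/-- Matrices carry the product (Borel) measurable structure. -/
instance matrixMeasurableSpace {m n α : Type*} [MeasurableSpace α] :
    MeasurableSpace (Matrix m n α) :=
  inferInstanceAs (MeasurableSpace (m → n → α))

instance matrixBorelSpace {m n : Type*} [Countable m] [Countable n] : BorelSpace (Matrix m n ℝ) :=
  inferInstanceAs (BorelSpace (m → n → ℝ))

set_option synthInstance.maxHeartbeats 1000000 in
set_option maxHeartbeats 2000000 in
lemma norm_toEuclideanCLM_transpose {d : ℕ} (C : Matrix (Fin d) (Fin d) ℝ) :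
    ‖Matrix.toEuclideanCLM (𝕜 := ℝ) Cᵀ‖ = ‖Matrix.toEuclideanCLM (𝕜 := ℝ) C‖ := by
  rw [← Matrix.conjTranspose_eq_transpose_of_trivial, ← star_eq_conjTranspose, map_star,
    ContinuousLinearMap.star_eq_adjoint, LinearIsometryEquiv.norm_map]

set_option synthInstance.maxHeartbeats 1000000 in
lemma continuous_toEuclideanCLM {d : ℕ} :
    Continuous (fun A : Matrix (Fin d) (Fin d) ℝ => Matrix.toEuclideanCLM (𝕜 := ℝ) A) :=
  LinearMap.continuous_of_finiteDimensional
    ({ toFun := fun A => Matrix.toEuclideanCLM (𝕜 := ℝ) A,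
       map_add' := fun a b => map_add _ a b,
       map_smul' := fun c a => map_smul (Matrix.toEuclideanCLM (𝕜 := ℝ)) c a } :
      Matrix (Fin d) (Fin d) ℝ →ₗ[ℝ] _)

set_option synthInstance.maxHeartbeats 1000000 in
set_option maxHeartbeats 2000000 in
theorem variance_transfer_bound {d : ℕ}
    {Ω : Type*} [MeasurableSpace Ω] (μ : Measure Ω) [IsProbabilityMeasure μ]
    (q σ₁' : ℝ) (hq0 : 0 ≤ q) (hq1 : q < 1) (hσ : 0 ≤ σ₁')
    (M : Ω → Matrix (Fin d) (Fin d) ℝ)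
    (hmeas : Measurable M)
    (hsqint : Integrable (fun ω => ‖Matrix.toEuclideanCLM (𝕜 := ℝ) (M ω)‖ ^ 2) μ)
    (Mbar : Matrix (Fin d) (Fin d) ℝ)
    (hmean : ∀ a b, ∫ ω, M ω a b ∂μ = Mbar a b)
    (hvar : ∫ ω, ‖Matrix.toEuclideanCLM (𝕜 := ℝ) (M ω - Mbar)‖ ^ 2 ∂μ ≤ σ₁')
    (G₁ : Matrix (Fin d) (Fin d) ℝ) (hG₁ : ‖Matrix.toEuclideanCLM (𝕜 := ℝ) G₁‖ ≤ 1)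
    (hq : ‖Matrix.toEuclideanCLM (𝕜 := ℝ) (Mbarᵀ * G₁ᵀ)‖ ≤ q)
    (y v : EuclideanSpace ℝ (Fin d)) :
    ∫ ω, ‖Matrix.toEuclideanCLM (𝕜 := ℝ) ((M ω)ᵀ * G₁ᵀ) v + y -
          (Matrix.toEuclideanCLM (𝕜 := ℝ) (Mbarᵀ * G₁ᵀ) v + y)‖ ^ 2 ∂μ ≤
      2 * σ₁' / (1 - q) ^ 2 *
          ‖Matrix.toEuclideanCLM (𝕜 := ℝ) (Mbarᵀ * G₁ᵀ) v + y - v‖ ^ 2 +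
        2 * σ₁' / (1 - q) ^ 2 * ‖y‖ ^ 2 := by
  set T := Matrix.toEuclideanCLM (𝕜 := ℝ) (n := Fin d) with hT
  -- pointwise identity for the integrand
  have hpt : ∀ ω, ‖T ((M ω)ᵀ * G₁ᵀ) v + y - (T (Mbarᵀ * G₁ᵀ) v + y)‖ ^ 2
      = ‖T ((M ω - Mbar)ᵀ * G₁ᵀ) v‖ ^ 2 := by
    intro ω
    have : (M ω - Mbar)ᵀ * G₁ᵀ = (M ω)ᵀ * G₁ᵀ - Mbarᵀ * G₁ᵀ := by
      rw [Matrix.transpose_sub, Matrix.sub_mul]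
    rw [this, map_sub, ContinuousLinearMap.sub_apply, add_sub_add_right_eq_sub]
  -- pointwise bound
  have hbd : ∀ ω, ‖T ((M ω - Mbar)ᵀ * G₁ᵀ) v‖ ^ 2
      ≤ ‖T (M ω - Mbar)‖ ^ 2 * ‖v‖ ^ 2 := by
    intro ω
    set C := M ω - Mbar
    have h1 : ‖T (Cᵀ * G₁ᵀ)‖ ≤ ‖T C‖ := by
      calc ‖T (Cᵀ * G₁ᵀ)‖ = ‖T Cᵀ * T G₁ᵀ‖ := by rw [_root_.map_mul]
        _ ≤ ‖T Cᵀ‖ * ‖T G₁ᵀ‖ := norm_mul_le _ _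
        _ ≤ ‖T C‖ * 1 := by
            rw [norm_toEuclideanCLM_transpose, norm_toEuclideanCLM_transpose]
            exact mul_le_mul_of_nonneg_left hG₁ (norm_nonneg _)
        _ = ‖T C‖ := mul_one _
    have h2 : ‖T (Cᵀ * G₁ᵀ) v‖ ≤ ‖T C‖ * ‖v‖ :=
      le_trans ((T (Cᵀ * G₁ᵀ)).le_opNorm v)
        (mul_le_mul_of_nonneg_right h1 (norm_nonneg _))
    calc ‖T (Cᵀ * G₁ᵀ) v‖ ^ 2 ≤ (‖T C‖ * ‖v‖) ^ 2 := by
          exact pow_le_pow_left₀ (norm_nonneg _) h2 2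
      _ = ‖T C‖ ^ 2 * ‖v‖ ^ 2 := by ring
  -- integrability of the dominating function
  have hmC : Measurable (fun ω => M ω - Mbar) := by
    apply measurable_pi_lambda _ fun a => measurable_pi_lambda _ fun b => ?_
    exact ((measurable_pi_apply b).comp ((measurable_pi_apply a).comp hmeas)).sub
      measurable_const
  have hsm : AEStronglyMeasurable (fun ω => ‖T (M ω - Mbar)‖ ^ 2 * ‖v‖ ^ 2) μ := by
    apply AEStronglyMeasurable.mul_const
    exact ((continuous_toEuclideanCLM.measurable.comp hmC).norm.pow_const 2).aestronglyMeasurable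
  have hint : Integrable (fun ω => ‖T (M ω - Mbar)‖ ^ 2 * ‖v‖ ^ 2) μ := by
    have hg : Integrable (fun ω => (2 * ‖T (M ω)‖ ^ 2 + 2 * ‖T Mbar‖ ^ 2) * ‖v‖ ^ 2) μ := by
      apply Integrable.mul_const
      exact ((hsqint.const_mul 2).add (integrable_const _))
    refine hg.mono' hsm (ae_of_all _ fun ω => ?_)
    have h1 : ‖T (M ω - Mbar)‖ ≤ ‖T (M ω)‖ + ‖T Mbar‖ := by
      rw [map_sub]; exact norm_sub_le _ _
    have h2 : ‖T (M ω - Mbar)‖ ^ 2 ≤ 2 * ‖T (M ω)‖ ^ 2 + 2 * ‖T Mbar‖ ^ 2 := by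
      nlinarith [sq_nonneg (‖T (M ω)‖ - ‖T Mbar‖), norm_nonneg (T (M ω - Mbar)),
        mul_self_le_mul_self (norm_nonneg (T (M ω - Mbar))) h1]
    have hv : (0:ℝ) ≤ ‖v‖ ^ 2 := sq_nonneg _
    have : ‖T (M ω - Mbar)‖ ^ 2 * ‖v‖ ^ 2 ≤ (2 * ‖T (M ω)‖ ^ 2 + 2 * ‖T Mbar‖ ^ 2) * ‖v‖ ^ 2 :=
      mul_le_mul_of_nonneg_right h2 hv
    calc ‖(fun ω => ‖T (M ω - Mbar)‖ ^ 2 * ‖v‖ ^ 2) ω‖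
        = ‖T (M ω - Mbar)‖ ^ 2 * ‖v‖ ^ 2 := by
          simp [abs_of_nonneg (mul_nonneg (sq_nonneg _) hv)]
      _ ≤ _ := this
  -- integral bound
  have hI : ∫ ω, ‖T ((M ω)ᵀ * G₁ᵀ) v + y - (T (Mbarᵀ * G₁ᵀ) v + y)‖ ^ 2 ∂μ
      ≤ σ₁' * ‖v‖ ^ 2 := by
    calc ∫ ω, ‖T ((M ω)ᵀ * G₁ᵀ) v + y - (T (Mbarᵀ * G₁ᵀ) v + y)‖ ^ 2 ∂μ
        ≤ ∫ ω, ‖T (M ω - Mbar)‖ ^ 2 * ‖v‖ ^ 2 ∂μ := by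
          refine integral_mono_of_nonneg (ae_of_all _ fun ω => sq_nonneg _) hint
            (ae_of_all _ fun ω => ?_)
          dsimp only; rw [hpt ω]; exact hbd ω
      _ = (∫ ω, ‖T (M ω - Mbar)‖ ^ 2 ∂μ) * ‖v‖ ^ 2 := integral_mul_const _ _
      _ ≤ σ₁' * ‖v‖ ^ 2 := mul_le_mul_of_nonneg_right hvar (sq_nonneg _)
  -- algebraic step
  set a := ‖T (Mbarᵀ * G₁ᵀ) v + y - v‖ with ha
  set b := ‖y‖ with hb
  have hkey : (1 - q) * ‖v‖ ≤ a + b := by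
    have hv : v = -(T (Mbarᵀ * G₁ᵀ) v + y - v) + T (Mbarᵀ * G₁ᵀ) v + y := by abel
    calc (1 - q) * ‖v‖ = ‖v‖ - q * ‖v‖ := by ring
      _ ≤ ‖v‖ - ‖T (Mbarᵀ * G₁ᵀ) v‖ := by
          have := (T (Mbarᵀ * G₁ᵀ)).le_opNorm v
          have h2 : ‖T (Mbarᵀ * G₁ᵀ) v‖ ≤ q * ‖v‖ :=
            le_trans this (mul_le_mul_of_nonneg_right hq (norm_nonneg _))
          linarith
      _ ≤ a + b := by
          have : ‖v‖ ≤ a + ‖T (Mbarᵀ * G₁ᵀ) v‖ + b := by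
            calc ‖v‖ = ‖-(T (Mbarᵀ * G₁ᵀ) v + y - v) + T (Mbarᵀ * G₁ᵀ) v + y‖ := by rw [← hv]
              _ ≤ ‖-(T (Mbarᵀ * G₁ᵀ) v + y - v) + T (Mbarᵀ * G₁ᵀ) v‖ + ‖y‖ := norm_add_le _ _
              _ ≤ ‖-(T (Mbarᵀ * G₁ᵀ) v + y - v)‖ + ‖T (Mbarᵀ * G₁ᵀ) v‖ + ‖y‖ := by
                  have := norm_add_le (-(T (Mbarᵀ * G₁ᵀ) v + y - v)) (T (Mbarᵀ * G₁ᵀ) v)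
                  linarith
              _ = a + ‖T (Mbarᵀ * G₁ᵀ) v‖ + b := by rw [norm_neg]
          linarith
  have h1q : (0:ℝ) < 1 - q := by linarith
  have hvsq : (1 - q) ^ 2 * ‖v‖ ^ 2 ≤ 2 * a ^ 2 + 2 * b ^ 2 := by
    have h1 : ((1 - q) * ‖v‖) ^ 2 ≤ (a + b) ^ 2 :=
      pow_le_pow_left₀ (by positivity) hkey 2
    nlinarith [sq_nonneg (a - b)]
  have hfinal : σ₁' * ‖v‖ ^ 2 ≤ 2 * σ₁' / (1 - q) ^ 2 * a ^ 2 + 2 * σ₁' / (1 - q) ^ 2 * b ^ 2 := by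
    rw [div_mul_eq_mul_div, div_mul_eq_mul_div, ← add_div, le_div_iff₀ (by positivity)]
    nlinarith [sq_nonneg (1 - q)]
  exact le_trans hI hfinal
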